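/- Let n = 2, m ≥ 3, and 1 ≤ k < m−1. Then β_{m−1} ≱_PS β_k; that is, there exists a profile of 2 preferences over m candidates at which the k-Borda rule β_k is manipulable but the Borda rule β_{m−1} is not manipulable. -/

import Mathlib

/-- A preference order on `m` candidates: `σ c` is the position of candidate `c`
(position `0` is the most preferred). `σ c < σ d` means `c` is strictly preferred to `d`. -/
abbrev Pref (m : ℕ) := Fin m ≃ Fin m

/-- A voting rule for `n` voters and `m` candidates. -/
abbrev Rule (m n : ℕ) := (Fin n → Pref m) → Fin m

/-- Total score of candidate `c` under score vector `s` (indexed by position) at profile `P`. -/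
def score {m n : ℕ} (s : Fin m → ℕ) (P : Fin n → Pref m) (c : Fin m) : ℕ :=
  ∑ v, s (P v c)

/-- The scoring rule with score vector `s`: the winner is the candidate that is first in the
lexicographic tie-breaking order (i.e. has the least index) among those of maximal score. -/
def winner {m n : ℕ} [NeZero m] (s : Fin m → ℕ) (P : Fin n → Pref m) : Fin m :=
  (Finset.univ.filter fun c => ∀ d, score s P d ≤ score s P c).min' (by
    obtain ⟨c, -, hc⟩ := Finset.exists_max_image Finset.univ (score s P) Finset.univ_nonempty
    exact ⟨c, Finset.mem_filter.mpr ⟨Finset.mem_univ c, fun d => hc d (Finset.mem_univ d)⟩⟩)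

/-- `k`-approval, `α_k`: one point for each of the top `k` positions. -/
def approval (m n k : ℕ) [NeZero m] : Rule m n :=
  winner (fun r => if (r : ℕ) < k then 1 else 0)

/-- `k`-Borda, `β_k`: `max (0, k - r + 1)` points for (`1`-indexed) position `r`, i.e. `k - r`
(truncated subtraction) points for `0`-indexed position `r`. -/
def kBorda (m n k : ℕ) [NeZero m] : Rule m n :=
  winner (fun r => k - (r : ℕ))

/-- `f` is manipulable at profile `P`: some voter `v` can misreport some preference `Q` and
obtain an outcome strictly preferred (by `v`'s true preferences) to the sincere outcome. -/
def Manipulable {m n : ℕ} (f : Rule m n) (P : Fin n → Pref m) : Prop :=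
  ∃ (v : Fin n) (Q : Pref m), P v (f (Function.update P v Q)) < P v (f P)

/-- `f ≥_PS g` : every profile at which `g` is manipulable is one at which `f` is manipulable. -/
def MoreManip {m n : ℕ} (f g : Rule m n) : Prop :=
  ∀ P : Fin n → Pref m, Manipulable g P → Manipulable f P

section WinnerLemmas
variable {m n : ℕ} [NeZero m] (s : Fin m → ℕ) (P : Fin n → Pref m)

lemma winner_max (d : Fin m) : score s P d ≤ score s P (winner s P) := by
  have h := Finset.min'_mem (Finset.univ.filter fun c => ∀ d, score s P d ≤ score s P c)
    (by obtain ⟨c, -, hc⟩ := Finset.exists_max_image Finset.univ (score s P) Finset.univ_nonempty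
        exact ⟨c, Finset.mem_filter.mpr ⟨Finset.mem_univ c, fun d => hc d (Finset.mem_univ d)⟩⟩)
  exact (Finset.mem_filter.mp h).2 d

lemma winner_le {c : Fin m} (hc : ∀ d, score s P d ≤ score s P c) : winner s P ≤ c := by
  exact Finset.min'_le _ _ (Finset.mem_filter.mpr ⟨Finset.mem_univ c, hc⟩)

lemma winner_eq_zero (h : ∀ d, score s P d ≤ score s P 0) : winner s P = 0 :=
  le_antisymm (winner_le s P h) (Fin.zero_le _)

lemma winner_gt {c : Fin m} (hc : c < winner s P) :
    score s P c < score s P (winner s P) := by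
  by_contra h
  push_neg at h
  have : winner s P ≤ c := winner_le s P (fun d => le_trans (winner_max s P d) h)
  exact absurd hc (not_lt.mpr this)

lemma winner_eq_one (hm : 1 < m) (h1 : ∀ d, score s P d ≤ score s P 1)
    (h0 : score s P 0 < score s P 1) : winner s P = 1 := by
  have hle : winner s P ≤ 1 := winner_le s P h1
  have hne : winner s P ≠ 0 := by
    intro h
    have := winner_max s P 1
    rw [h] at this
    omega
  have hv1 : ((1 : Fin m) : ℕ) = 1 := by
    rw [Fin.val_one']; exact Nat.mod_eq_of_lt hm
  have h2 := Fin.le_def.mp hle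
  have h3 : (winner s P).val ≠ 0 := fun hh => hne (Fin.ext (by simpa using hh))
  apply Fin.ext
  rw [hv1]
  omega
end WinnerLemmas

section Perms
variable (M : ℕ)

/-- voter 2's sincere preference: 2 ≻ 0 ≻ 3 ≻ 4 ≻ ⋯ ≻ (m-1) ≻ 1 -/
def p2 : Pref (M+3) :=
  (((Equiv.swap 0 2).trans (Equiv.swap 0 1)).trans (Equiv.subRight 1) : Equiv.Perm (Fin (M+3)))

/-- voter 1's sincere preference: 1 ≻ 0 ≻ 3 ≻ 4 ≻ ⋯ ≻ (m-1) ≻ 2 -/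
def p1 : Pref (M+3) := (Equiv.swap 1 2).trans (p2 M)

lemma val_sub_one (x : Fin (M+3)) :
    ((x - 1 : Fin (M+3)) : ℕ) = if (x:ℕ) = 0 then M+2 else (x:ℕ) - 1 := by
  rw [Fin.sub_def]
  have h1 : ((1 : Fin (M+3)) : ℕ) = 1 := rfl
  simp only [h1]
  have hx := x.isLt
  rcases Nat.eq_zero_or_pos (x:ℕ) with h | h
  · simp [h]
  · have : (M + 3 - 1 + (x:ℕ)) = ((x:ℕ) - 1) + (M+3) := by omega
    rw [this, Nat.add_mod_right, Nat.mod_eq_of_lt (by omega), if_neg (by omega)]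

lemma p2_val (c : Fin (M+3)) :
    ((p2 M c : Fin (M+3)) : ℕ) =
      if (c:ℕ) = 2 then 0 else if (c:ℕ) = 0 then 1 else if (c:ℕ) = 1 then M+2
      else (c:ℕ) - 1 := by
  have h0 : ((0 : Fin (M+3)) : ℕ) = 0 := rfl
  have h1 : ((1 : Fin (M+3)) : ℕ) = 1 := rfl
  have h2 : ((2 : Fin (M+3)) : ℕ) = 2 := rfl
  simp only [p2, Equiv.trans_apply, Equiv.subRight_apply, Equiv.swap_apply_def]
  rw [val_sub_one]
  split_ifs with g1 g2 g3 g4 g5 g6 g7 g8 g9 <;>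
    (simp only [Fin.ext_iff, h0, h1, h2, Nat.reduceEqDiff, ↓reduceIte, OfNat.ofNat_ne_zero, one_ne_zero, zero_ne_one, not_true_eq_false, not_false_eq_true] at * <;> omega)

lemma p1_val (c : Fin (M+3)) :
    ((p1 M c : Fin (M+3)) : ℕ) =
      if (c:ℕ) = 1 then 0 else if (c:ℕ) = 0 then 1 else if (c:ℕ) = 2 then M+2
      else (c:ℕ) - 1 := by
  have h0 : ((0 : Fin (M+3)) : ℕ) = 0 := rfl
  have h1 : ((1 : Fin (M+3)) : ℕ) = 1 := rfl
  have h2 : ((2 : Fin (M+3)) : ℕ) = 2 := rfl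
  simp only [p1, Equiv.trans_apply, Equiv.swap_apply_def]
  split_ifs with g1 g2 <;> rw [p2_val] <;>
    (simp only [Fin.ext_iff, h0, h1, h2, Nat.reduceEqDiff, ↓reduceIte, OfNat.ofNat_ne_zero, one_ne_zero, zero_ne_one, not_true_eq_false, not_false_eq_true] at * <;> first | omega | (split_ifs <;> omega))

/-- voter 1's deviation (for k ≥ 2): reverse of p2 -/
def q1 : Pref (M+3) := (p2 M).trans Fin.revPerm

/-- voter 2's deviation (for k = 1): p2 with positions 0,1 swapped -/
def q2 : Pref (M+3) := (p2 M).trans (Equiv.swap 0 1)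

lemma q1_val (c : Fin (M+3)) :
    ((q1 M c : Fin (M+3)) : ℕ) = M + 2 - ((p2 M c : Fin (M+3)) : ℕ) := by
  simp only [q1, Equiv.trans_apply, Fin.revPerm_apply, Fin.val_rev]
  omega

lemma q2_val (c : Fin (M+3)) :
    ((q2 M c : Fin (M+3)) : ℕ) =
      if (c:ℕ) = 2 then 1 else if (c:ℕ) = 0 then 0 else if (c:ℕ) = 1 then M+2
      else (c:ℕ) - 1 := by
  have h0 : ((0 : Fin (M+3)) : ℕ) = 0 := rfl
  have h1 : ((1 : Fin (M+3)) : ℕ) = 1 := rfl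
  have hp := p2_val M c
  simp only [q2, Equiv.trans_apply]
  by_cases g1 : (c:ℕ) = 2
  · rw [if_pos g1] at hp ⊢
    have : p2 M c = 0 := Fin.ext (by rw [hp, h0])
    rw [this, Equiv.swap_apply_left, h1]
  · rw [if_neg g1] at hp ⊢
    by_cases g2 : (c:ℕ) = 0
    · rw [if_pos g2] at hp ⊢
      have : p2 M c = 1 := Fin.ext (by rw [hp, h1])
      rw [this, Equiv.swap_apply_right, h0]
    · rw [if_neg g2] at hp ⊢
      have hne0 : p2 M c ≠ 0 := fun h => by
        rw [h, h0] at hp; split_ifs at hp <;> omega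
      have hne1 : p2 M c ≠ 1 := fun h => by
        rw [h, h1] at hp
        have hc := c.isLt
        split_ifs at hp <;> omega
      rw [Equiv.swap_apply_of_ne_of_ne hne0 hne1, hp]
end Perms

section Helpers
variable {M : ℕ}

lemma score_pair (s : Fin (M+3) → ℕ) (A B : Pref (M+3)) (c : Fin (M+3)) :
    score s ![A, B] c = s (A c) + s (B c) := by
  simp [score, Fin.sum_univ_two]

lemma upd0 (A B Q : Pref (M+3)) :
    Function.update (![A, B] : Fin 2 → Pref (M+3)) 0 Q = ![Q, B] := by
  funext i; fin_cases i <;> simp [Function.update]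

lemma upd1 (A B Q : Pref (M+3)) :
    Function.update (![A, B] : Fin 2 → Pref (M+3)) 1 Q = ![A, Q] := by
  funext i; fin_cases i <;> simp [Function.update]
end Helpers

set_option maxHeartbeats 1000000 in
/-- For `n = 2`, `m ≥ 3` and `1 ≤ k < m-1`: `β_{m-1} ≱_PS β_k`. -/
theorem stmt_19 (m k : ℕ) [NeZero m] (hm : 3 ≤ m) (hk : 1 ≤ k) (hkm : k < m - 1) :
    ∃ P : Fin 2 → Pref m,
      Manipulable (kBorda m 2 k) P ∧ ¬ Manipulable (kBorda m 2 (m - 1)) P := by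
  obtain ⟨M, rfl⟩ : ∃ M, m = M + 3 := ⟨m - 3, by omega⟩
  have hkM : k ≤ M + 1 := by omega
  have h0v : ((0 : Fin (M+3)) : ℕ) = 0 := rfl
  have h1v : ((1 : Fin (M+3)) : ℕ) = 1 := rfl
  have h2v : ((2 : Fin (M+3)) : ℕ) = 2 := rfl
  refine ⟨![p1 M, p2 M], ?_, ?_⟩
  · -- k-Borda is manipulable
    rcases Nat.lt_or_ge k 2 with hk1 | hk2
    · -- k = 1 : voter 2 manipulates towards candidate 0
      have hkeq : k = 1 := by omega
      subst hkeq
      refine ⟨1, q2 M, ?_⟩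
      rw [show kBorda (M+3) 2 1 = winner (fun r : Fin (M+3) => 1 - (r:ℕ)) from rfl, upd1]
      have hs : winner (fun r : Fin (M+3) => 1 - (r:ℕ)) ![p1 M, p2 M] = 1 := by
        apply winner_eq_one _ _ (by omega)
        · intro d; have hd := d.isLt
          simp only [score_pair, p1_val, p2_val, h0v, h1v, h2v]
          split_ifs <;> first | contradiction | omega
        · simp only [score_pair, p1_val, p2_val, h0v, h1v, h2v]
          split_ifs <;> first | contradiction | omega
      have hd : winner (fun r : Fin (M+3) => 1 - (r:ℕ)) ![p1 M, q2 M] = 0 := by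
        apply winner_eq_zero
        intro d; have hd := d.isLt
        simp only [score_pair, p1_val, q2_val, h0v, h1v, h2v]
        split_ifs <;> first | contradiction | omega
      rw [hs, hd]
      simp only [Matrix.cons_val_one, Matrix.head_cons, Matrix.cons_val_zero]
      exact Fin.lt_def.mpr (by rw [p2_val, p2_val, h0v, h1v]; split_ifs <;> first | contradiction | omega)
    · -- k ≥ 2 : voter 1 manipulates towards candidate 1
      refine ⟨0, q1 M, ?_⟩
      rw [show kBorda (M+3) 2 k = winner (fun r : Fin (M+3) => k - (r:ℕ)) from rfl, upd0]
      have hs : winner (fun r : Fin (M+3) => k - (r:ℕ)) ![p1 M, p2 M] = 0 := by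
        apply winner_eq_zero
        intro d; have hd := d.isLt
        simp only [score_pair, p1_val, p2_val, h0v, h1v, h2v]
        split_ifs <;> first | contradiction | omega
      have hd : winner (fun r : Fin (M+3) => k - (r:ℕ)) ![q1 M, p2 M] = 1 := by
        apply winner_eq_one _ _ (by omega)
        · intro d; have hd := d.isLt
          simp only [score_pair, q1_val, p2_val, h0v, h1v, h2v]
          split_ifs <;> first | contradiction | omega
        · simp only [score_pair, q1_val, p2_val, h0v, h1v, h2v]
          split_ifs <;> first | contradiction | omega
      rw [hs, hd]
      simp only [Matrix.cons_val_zero]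
      exact Fin.lt_def.mpr (by rw [p1_val, p1_val, h0v, h1v]; split_ifs <;> first | contradiction | omega)
  · -- Borda is not manipulable
    rintro ⟨v, Q, hlt⟩
    rw [show kBorda (M+3) 2 (M+3-1) = winner (fun r : Fin (M+3) => (M+2) - (r:ℕ)) from rfl]
      at hlt
    have hBW : winner (fun r : Fin (M+3) => (M+2) - (r:ℕ)) ![p1 M, p2 M] = 0 := by
      apply winner_eq_zero
      intro d; have hd := d.isLt
      simp only [score_pair, p1_val, p2_val, h0v, h1v, h2v]
      split_ifs <;> first | contradiction | omega
    rw [hBW] at hlt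
    have hQ0 := (Q 0).isLt
    have hQ1 := (Q 1).isLt
    have hQ2 := (Q 2).isLt
    have hne02 : ((Q 0 : Fin (M+3)) : ℕ) ≠ ((Q 2 : Fin (M+3)) : ℕ) := fun h => by
      have := Q.injective (Fin.ext h)
      rw [Fin.ext_iff, h0v, h2v] at this
      omega
    fin_cases v <;> simp only [Fin.zero_eta, Fin.mk_one, Fin.isValue] at hlt
    · -- voter 1 cannot benefit
      rw [upd0] at hlt
      simp only [Matrix.cons_val_zero] at hlt
      set w := winner (fun r : Fin (M+3) => (M+2) - (r:ℕ)) ![Q, p2 M] with hW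
      clear_value w
      have hp10 : ((p1 M 0 : Fin (M+3)) : ℕ) = 1 := by
        rw [p1_val, h0v]; norm_num
      have hwv : (w : ℕ) = 1 := by
        have hlt' := Fin.lt_def.mp hlt
        rw [hp10] at hlt'
        have h1' : ((p1 M w : Fin (M+3)) : ℕ) = 0 := by omega
        rw [p1_val] at h1'
        have := w.isLt
        split_ifs at h1' <;> first | contradiction | omega
      have hw : w = 1 := Fin.ext (by rw [hwv, h1v])
      have hgt := winner_gt (fun r : Fin (M+3) => (M+2) - (r:ℕ)) ![Q, p2 M]
        (c := 0) (by rw [← hW, hw]; exact Fin.lt_def.mpr (by rw [h0v, h1v]; omega))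
      have hmax := winner_max (fun r : Fin (M+3) => (M+2) - (r:ℕ)) ![Q, p2 M] 2
      rw [← hW, hw] at hgt hmax
      simp only [score_pair, p2_val, h0v, h1v, h2v] at hgt hmax
      split_ifs at hgt hmax <;> first | contradiction | omega
    · -- voter 2 cannot benefit
      rw [upd1] at hlt
      simp only [Matrix.cons_val_one, Matrix.head_cons, Matrix.cons_val_zero] at hlt
      set w := winner (fun r : Fin (M+3) => (M+2) - (r:ℕ)) ![p1 M, Q] with hW
      clear_value w
      have hp20 : ((p2 M 0 : Fin (M+3)) : ℕ) = 1 := by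
        rw [p2_val, h0v]; norm_num
      have hwv : (w : ℕ) = 2 := by
        have hlt' := Fin.lt_def.mp hlt
        rw [hp20] at hlt'
        have h1' : ((p2 M w : Fin (M+3)) : ℕ) = 0 := by omega
        rw [p2_val] at h1'
        have := w.isLt
        split_ifs at h1' <;> first | contradiction | omega
      have hw : w = 2 := Fin.ext (by rw [hwv, h2v])
      have hgt := winner_gt (fun r : Fin (M+3) => (M+2) - (r:ℕ)) ![p1 M, Q]
        (c := 1) (by rw [← hW, hw]; exact Fin.lt_def.mpr (by rw [h1v, h2v]; omega))
      rw [← hW, hw] at hgt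
      simp only [score_pair, p1_val, h0v, h1v, h2v] at hgt
      split_ifs at hgt <;> first | contradiction | omega
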